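/- arXiv:1802.02676 — 5 statements merged into one kernel-verified Lean document; each statement's English description precedes it below -/
import Mathlib

section
/- For all nonnegative integers r and s, in GL₃(ℤ_p) one has x_{12}^{-p^r} · x_{1122}^{p^s} · x_{12}^{p^r} · x_{1122}^{-p^s} = x_{12}^{p^r·((1+p)^{2p^s} − 1)}, where the exponent p^r·((1+p)^{2p^s} − 1) is a natural number. -/
open Matrix

/-- Powers of a unipotent matrix `1 + c·E₀₁`. -/
lemma unipotent_pow (p : ℕ) [Fact p.Prime] (c : ℤ_[p]) (n : ℕ) :
    (1 + Matrix.single 0 1 c : Matrix (Fin 3) (Fin 3) ℤ_[p]) ^ n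
      = 1 + Matrix.single 0 1 ((n : ℤ_[p]) * c) := by
  induction n with
  | zero => simp
  | succ n ih =>
    have h0 : (Matrix.single 0 1 ((n : ℤ_[p]) * c)) * Matrix.single 0 1 c
        = (0 : Matrix (Fin 3) (Fin 3) ℤ_[p]) :=
      Matrix.single_mul_single_of_ne _ 0 1 _ (show (1 : Fin 3) ≠ 0 by decide) c
    rw [pow_succ, ih, add_mul, mul_add, mul_add, one_mul, mul_one, h0, add_zero,
      show ((n + 1 : ℕ) : ℤ_[p]) * c = (n : ℤ_[p]) * c + c by push_cast; ring,
      Matrix.single_add]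
    simp only [one_mul]
    rw [add_assoc, add_comm (Matrix.single 0 1 c)]

theorem stmt_3 (p : ℕ) [Fact p.Prime] (hp : p ≠ 2)
    (x12 x1122 : GL (Fin 3) ℤ_[p])
    (u : ℤ_[p]ˣ) (hu : (u : ℤ_[p]) = 1 + p)
    (h12 : (x12 : Matrix (Fin 3) (Fin 3) ℤ_[p]) = 1 + Matrix.single 0 1 (p : ℤ_[p]))
    (h1122 : (x1122 : Matrix (Fin 3) (Fin 3) ℤ_[p]) = Matrix.diagonal ![(u : ℤ_[p]), (↑u⁻¹ : ℤ_[p]), 1])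
    (r s : ℕ) :
    (x12 ^ p ^ r)⁻¹ * x1122 ^ p ^ s * x12 ^ p ^ r * (x1122 ^ p ^ s)⁻¹ = x12 ^ (p ^ r * ((1 + p) ^ (2 * p ^ s) - 1)) := by
  set N : ℕ := p ^ r * ((1 + p) ^ (2 * p ^ s) - 1) with hN
  set m : ℕ := p ^ s with hm
  -- matrix forms
  have ha : ((x12 ^ p ^ r : GL (Fin 3) ℤ_[p]) : Matrix (Fin 3) (Fin 3) ℤ_[p])
      = 1 + Matrix.single 0 1 (((p ^ r : ℕ) : ℤ_[p]) * p) := by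
    rw [Units.val_pow_eq_pow_val, h12, unipotent_pow]
  have hb : ((x12 ^ N : GL (Fin 3) ℤ_[p]) : Matrix (Fin 3) (Fin 3) ℤ_[p])
      = 1 + Matrix.single 0 1 (((N : ℕ) : ℤ_[p]) * p) := by
    rw [Units.val_pow_eq_pow_val, h12, unipotent_pow]
  have hD : ((x1122 ^ m : GL (Fin 3) ℤ_[p]) : Matrix (Fin 3) (Fin 3) ℤ_[p])
      = Matrix.diagonal ![(u : ℤ_[p]) ^ m, (↑u⁻¹ : ℤ_[p]) ^ m, 1] := by
    rw [Units.val_pow_eq_pow_val, h1122, Matrix.diagonal_pow,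
      show (![(u : ℤ_[p]), (↑u⁻¹ : ℤ_[p]), 1] ^ m) = ![(u : ℤ_[p]) ^ m, (↑u⁻¹ : ℤ_[p]) ^ m, 1] by
        funext i; fin_cases i <;> simp]
  -- key scalar identity
  have hone : 1 ≤ (1 + p) ^ (2 * m) := Nat.one_le_pow _ _ (by omega)
  have hscalar : ((u : ℤ_[p]) ^ (2 * m)) * ((p : ℤ_[p]) ^ r * p)
      = ((N : ℕ) : ℤ_[p]) * p + (p : ℤ_[p]) ^ r * p := by
    have : ((N : ℕ) : ℤ_[p]) = (p : ℤ_[p]) ^ r * ((u : ℤ_[p]) ^ (2 * m) - 1) := by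
      rw [hN, Nat.cast_mul, Nat.cast_sub hone, hu]
      push_cast
      ring
    rw [this]
    ring
  have h1 : (u : ℤ_[p]) ^ m * (↑u⁻¹ : ℤ_[p]) ^ m = 1 := by
    rw [← mul_pow, ← Units.val_mul, mul_inv_cancel, Units.val_one, one_pow]
  have hmain : (u : ℤ_[p]) ^ m * ((p : ℤ_[p]) ^ r * p)
      = (((N : ℕ) : ℤ_[p]) * p + (p : ℤ_[p]) ^ r * p) * (↑u⁻¹ : ℤ_[p]) ^ m := by
    rw [← hscalar]
    calc (u : ℤ_[p]) ^ m * ((p : ℤ_[p]) ^ r * p)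
        = (u : ℤ_[p]) ^ m * ((p : ℤ_[p]) ^ r * p) * ((u : ℤ_[p]) ^ m * (↑u⁻¹ : ℤ_[p]) ^ m) := by
          rw [h1, mul_one]
      _ = (u : ℤ_[p]) ^ (2 * m) * ((p : ℤ_[p]) ^ r * p) * (↑u⁻¹ : ℤ_[p]) ^ m := by ring
  -- the key relation, inverse-free
  have key : (x1122 ^ m) * (x12 ^ p ^ r)
      = (x12 ^ p ^ r) * ((x12 ^ N) * (x1122 ^ m)) := by
    apply Units.ext
    rw [Units.val_mul, Units.val_mul, Units.val_mul, ha, hb, hD]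
    ext i j
    fin_cases i <;> fin_cases j <;>
      simp [Matrix.mul_apply, Fin.sum_univ_three, Matrix.single,
        Matrix.diagonal, Matrix.one_apply, Matrix.add_apply, Matrix.of_apply] <;>
      linear_combination hmain
  -- conclude by group manipulation
  rw [mul_inv_eq_iff_eq_mul, mul_assoc, key, inv_mul_cancel_left]
end

section
/- For all nonnegative integers r and s, in GL₃(ℤ_p) one has x_{23}^{-p^r} · x_{2233}^{p^s} · x_{23}^{p^r} · x_{2233}^{-p^s} = x_{23}^{p^r·((1+p)^{2p^s} − 1)}, where the exponent p^r·((1+p)^{2p^s} − 1) is a natural number. -/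
section aux

variable {p : ℕ} [Fact p.Prime]

private lemma diag_mul_std (d : Fin 3 → ℤ_[p]) (c : ℤ_[p]) :
    Matrix.diagonal d * Matrix.single (1 : Fin 3) (2 : Fin 3) c =
      Matrix.single (1 : Fin 3) (2 : Fin 3) (d 1 * c) := by
  ext a b
  rw [Matrix.diagonal_mul]
  simp only [Matrix.single, Matrix.of_apply, mul_ite, mul_zero]
  split_ifs with h
  · rcases h with ⟨h1, h2⟩; subst h1; subst h2; rfl
  · rfl

private lemma std_mul_diag (d : Fin 3 → ℤ_[p]) (c : ℤ_[p]) :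
    Matrix.single (1 : Fin 3) (2 : Fin 3) c * Matrix.diagonal d =
      Matrix.single (1 : Fin 3) (2 : Fin 3) (c * d 2) := by
  ext a b
  rw [Matrix.mul_diagonal]
  simp only [Matrix.single, Matrix.of_apply, ite_mul, zero_mul]
  split_ifs with h
  · rcases h with ⟨h1, h2⟩; subst h1; subst h2; rfl
  · rfl

end aux

theorem stmt_8 (p : ℕ) [Fact p.Prime] (hp : p ≠ 2)
    (x23 x2233 : GL (Fin 3) ℤ_[p])
    (u : ℤ_[p]ˣ) (hu : (u : ℤ_[p]) = 1 + p)
    (h23 : (x23 : Matrix (Fin 3) (Fin 3) ℤ_[p]) = 1 + Matrix.single 1 2 (p : ℤ_[p]))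
    (h2233 : (x2233 : Matrix (Fin 3) (Fin 3) ℤ_[p]) = Matrix.diagonal ![1, (u : ℤ_[p]), (↑u⁻¹ : ℤ_[p])])
    (r s : ℕ) :
    (x23 ^ p ^ r)⁻¹ * x2233 ^ p ^ s * x23 ^ p ^ r * (x2233 ^ p ^ s)⁻¹ = x23 ^ (p ^ r * ((1 + p) ^ (2 * p ^ s) - 1)) := by
  -- powers of x23
  have pow23 : ∀ n : ℕ, ((x23 ^ n : GL (Fin 3) ℤ_[p]) : Matrix (Fin 3) (Fin 3) ℤ_[p]) =
      1 + Matrix.single 1 2 ((n : ℤ_[p]) * p) := by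
    intro n
    induction n with
    | zero => simp
    | succ n ih =>
      rw [pow_succ, Units.val_mul, ih, h23]
      have hz : Matrix.single (1 : Fin 3) (2 : Fin 3) ((n : ℤ_[p]) * p) *
          Matrix.single (1 : Fin 3) (2 : Fin 3) (p : ℤ_[p]) = 0 :=
        Matrix.single_mul_single_of_ne _ (1 : Fin 3) (2 : Fin 3) _ (by decide) _
      have : ((n : ℤ_[p]) + 1) * p = (n : ℤ_[p]) * p + p := by ring
      rw [mul_add, mul_one, add_mul, one_mul, hz, add_zero, Nat.cast_add, Nat.cast_one, this,
        Matrix.single_add]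
      abel
  set N : ℕ := p ^ r * ((1 + p) ^ (2 * p ^ s) - 1) with hN
  have hNsum : p ^ r + N = p ^ r * (1 + p) ^ (2 * p ^ s) := by
    have h1 : 1 ≤ (1 + p) ^ (2 * p ^ s) := Nat.one_le_pow _ _ (by omega)
    obtain ⟨k, hk⟩ := Nat.exists_eq_add_of_le h1
    rw [hN, hk]
    simp [Nat.add_sub_cancel_left]
    ring
  -- key commutation relation
  have key : x2233 ^ p ^ s * x23 ^ p ^ r = x23 ^ p ^ r * x23 ^ N * x2233 ^ p ^ s := by
    apply Units.ext
    rw [Units.val_mul, Units.val_mul, Units.val_mul, pow23, pow23,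
      Units.val_pow_eq_pow_val, h2233, Matrix.diagonal_pow]
    have hd : (![1, (u : ℤ_[p]), (↑u⁻¹ : ℤ_[p])] ^ p ^ s) =
        ![1, (u : ℤ_[p]) ^ p ^ s, (↑u⁻¹ : ℤ_[p]) ^ p ^ s] := by
      funext i; fin_cases i <;> simp [Pi.pow_apply]
    rw [hd]
    set d : Fin 3 → ℤ_[p] := ![1, (u : ℤ_[p]) ^ p ^ s, (↑u⁻¹ : ℤ_[p]) ^ p ^ s] with hdd
    have huv : (u : ℤ_[p]) ^ p ^ s * (↑u⁻¹ : ℤ_[p]) ^ p ^ s = 1 := by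
      rw [← mul_pow, Units.mul_inv, one_pow]
    have hscal : d 1 * (((p : ℤ_[p]) ^ r) * p) =
        (((p ^ r : ℕ) : ℤ_[p]) + ((N : ℕ) : ℤ_[p])) * p * d 2 := by
      have hcast : ((p ^ r : ℕ) : ℤ_[p]) + ((N : ℕ) : ℤ_[p]) =
          ((p : ℤ_[p]) ^ r) * ((u : ℤ_[p]) ^ p ^ s) ^ 2 := by
        rw [← Nat.cast_add, hNsum, Nat.cast_mul, Nat.cast_pow, Nat.cast_pow, Nat.cast_add,
          Nat.cast_one, ← hu, ← pow_mul, mul_comm 2 (p ^ s), pow_mul]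
      rw [hcast, hdd]
      simp only [Matrix.cons_val_one, Matrix.head_cons, Matrix.cons_val_two, Matrix.tail_cons, Matrix.cons_val_zero]
      linear_combination (-(p : ℤ_[p]) ^ r * p * (u : ℤ_[p]) ^ p ^ s) * huv
    calc Matrix.diagonal d * (1 + Matrix.single 1 2 (((p ^ r : ℕ) : ℤ_[p]) * p))
        = Matrix.diagonal d + Matrix.single 1 2 (d 1 * (((p : ℤ_[p]) ^ r) * p)) := by
          rw [mul_add, mul_one, diag_mul_std, Nat.cast_pow]
      _ = Matrix.diagonal d +
            Matrix.single 1 2 ((((p ^ r : ℕ) : ℤ_[p]) + ((N : ℕ) : ℤ_[p])) * p * d 2) := by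
          rw [hscal]
      _ = (1 + Matrix.single 1 2 (((p ^ r : ℕ) : ℤ_[p]) * p)) *
            (1 + Matrix.single 1 2 (((N : ℕ) : ℤ_[p]) * p)) * Matrix.diagonal d := by
          have hz : Matrix.single (1 : Fin 3) (2 : Fin 3) (((p ^ r : ℕ) : ℤ_[p]) * p) *
              Matrix.single (1 : Fin 3) (2 : Fin 3) (((N : ℕ) : ℤ_[p]) * p) = 0 :=
            Matrix.single_mul_single_of_ne _ (1 : Fin 3) (2 : Fin 3) _ (by decide) _
          have hAB : (1 + Matrix.single (1 : Fin 3) (2 : Fin 3) (((p ^ r : ℕ) : ℤ_[p]) * p)) *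
              (1 + Matrix.single (1 : Fin 3) (2 : Fin 3) (((N : ℕ) : ℤ_[p]) * p)) =
              1 + Matrix.single (1 : Fin 3) (2 : Fin 3)
                (((p ^ r : ℕ) : ℤ_[p]) * p + ((N : ℕ) : ℤ_[p]) * p) := by
            rw [mul_add, mul_one, add_mul, one_mul, hz, add_zero, Matrix.single_add]
            abel
          rw [hAB, Matrix.add_mul, Matrix.one_mul, std_mul_diag]
          congr 2
          ring
  calc (x23 ^ p ^ r)⁻¹ * x2233 ^ p ^ s * x23 ^ p ^ r * (x2233 ^ p ^ s)⁻¹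
      = (x23 ^ p ^ r)⁻¹ * (x2233 ^ p ^ s * x23 ^ p ^ r) * (x2233 ^ p ^ s)⁻¹ := by group
    _ = (x23 ^ p ^ r)⁻¹ * (x23 ^ p ^ r * x23 ^ N * x2233 ^ p ^ s) * (x2233 ^ p ^ s)⁻¹ := by
        rw [key]
    _ = x23 ^ N := by group
end

section
/- For every integer k ≥ 2, the inverse in ℤ_p of the unit 1 + p^k lies in the topological closure of the set {(1+p)^n : n ∈ ℕ} in ℤ_p; that is, (1+p^k)^{-1} is a limit of a sequence of natural-number powers of 1+p. -/
open Finset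

section aux
variable {p : ℕ} [hp : Fact p.Prime]

lemma padic_dvd_iff_toZMod (z : ℤ_[p]) : (p : ℤ_[p]) ∣ z ↔ PadicInt.toZMod z = 0 := by
  rw [← RingHom.mem_ker, PadicInt.ker_toZMod, PadicInt.maximalIdeal_eq_span_p,
    Ideal.mem_span_singleton]

lemma padic_pow_p_step (hp2 : p ≠ 2) (m : ℕ) (c : ℤ_[p]) :
    ∃ d : ℤ_[p], (1 + (p:ℤ_[p])^(m+1) * c)^p
      = 1 + (p:ℤ_[p])^(m+2) * c + (p:ℤ_[p])^(m+3) * d := by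
  set P : ℤ_[p] := (p:ℤ_[p])^(m+1) * c with hP
  have h3 : 3 ≤ p := by
    have h2 := hp.out.two_le
    rcases Nat.lt_or_ge p 3 with h | h
    · interval_cases p <;> simp_all
    · exact h
  have hsum : ∀ i ∈ Ico 2 (p+1), (p:ℤ_[p])^(m+3) ∣ P^i * 1^(p-i) * (p.choose i : ℤ_[p]) := by
    intro i hi
    simp only [mem_Ico] at hi
    rcases eq_or_lt_of_le (show i ≤ p by omega) with h | h
    · have : (p:ℤ_[p])^(m+3) ∣ P^i := by
        have h1 : (p:ℤ_[p])^(m+3) ∣ ((p:ℤ_[p])^(m+1))^i := by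
          rw [← pow_mul]
          exact pow_dvd_pow _ (by nlinarith)
        exact h1.trans (by rw [hP, mul_pow]; exact Dvd.intro _ rfl)
      exact (this.mul_right _).mul_right _
    · have h1 : (p:ℤ_[p]) ∣ (p.choose i : ℤ_[p]) :=
        Nat.cast_dvd_cast (hp.out.dvd_choose_self (by omega) h)
      have h2 : (p:ℤ_[p])^(2*(m+1)) ∣ P^i := by
        calc (p:ℤ_[p])^(2*(m+1)) = ((p:ℤ_[p])^(m+1))^2 := by rw [← pow_mul, mul_comm]
        _ ∣ P^2 := by rw [hP, mul_pow]; exact Dvd.intro _ rfl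
        _ ∣ P^i := pow_dvd_pow _ (by omega)
      have h4 : (p:ℤ_[p])^(m+3) ∣ (p:ℤ_[p])^(2*(m+1)) * (p:ℤ_[p]) := by
        rw [← pow_succ]; exact pow_dvd_pow _ (by omega)
      calc (p:ℤ_[p])^(m+3) ∣ (p:ℤ_[p])^(2*(m+1)) * (p:ℤ_[p]) := h4
        _ ∣ P^i * (p.choose i : ℤ_[p]) := mul_dvd_mul h2 h1
        _ = P^i * 1^(p-i) * (p.choose i : ℤ_[p]) := by rw [one_pow, mul_one]
  obtain ⟨d, hd⟩ := Finset.dvd_sum hsum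
  refine ⟨d, ?_⟩
  have hbin := add_pow P 1 p
  rw [Finset.range_eq_Ico, Finset.sum_eq_sum_Ico_succ_bot (by omega),
    Finset.sum_eq_sum_Ico_succ_bot (by omega), hd] at hbin
  simp only [zero_add, pow_zero, pow_one, one_pow, mul_one, one_mul, Nat.choose_zero_right,
    Nat.choose_one_right, Nat.cast_one] at hbin
  rw [add_comm P 1] at hbin
  rw [hbin]
  have hPp : P * (p:ℤ_[p]) = (p:ℤ_[p])^(m+2) * c := by rw [hP]; ring
  linear_combination hPp

lemma padic_pow_pow (hp2 : p ≠ 2) (m : ℕ) :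
    ∃ c : ℤ_[p], (1 + (p:ℤ_[p]))^(p^m) = 1 + (p:ℤ_[p])^(m+1) * c ∧ ¬ (p:ℤ_[p]) ∣ c := by
  induction m with
  | zero =>
    refine ⟨1, by simp, ?_⟩
    intro h
    rw [← PadicInt.norm_lt_one_iff_dvd] at h
    simp at h
  | succ m ih =>
    obtain ⟨c, hc, hcu⟩ := ih
    obtain ⟨d, hd⟩ := padic_pow_p_step hp2 m c
    refine ⟨c + (p:ℤ_[p]) * d, ?_, ?_⟩
    · rw [pow_succ, pow_mul, hc, hd]; ring
    · intro h
      exact hcu (by obtain ⟨w, hw⟩ := h; exact ⟨w - d, by linear_combination hw⟩)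

lemma padic_binom_lin (P : ℤ_[p]) (j : ℕ) :
    ∃ e : ℤ_[p], (1 + P)^j = 1 + P * j + P^2 * e := by
  obtain ⟨e, he⟩ := sq_dvd_add_pow_sub_sub P 1 j
  exact ⟨e, by rw [add_comm 1 P] at he; linear_combination he⟩

lemma padic_approx (hp2 : p ≠ 2) (y : ℤ_[p]) (hy : (p:ℤ_[p]) ∣ 1 - y) (m : ℕ) :
    ∃ n : ℕ, (p:ℤ_[p])^(m+1) ∣ (1 + (p:ℤ_[p]))^n - y := by
  have hy1 : PadicInt.toZMod y = 1 := by
    have := (padic_dvd_iff_toZMod _).mp hy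
    rw [map_sub, map_one, sub_eq_zero] at this
    exact this.symm
  induction m with
  | zero => exact ⟨0, by simpa using hy⟩
  | succ m ih =>
    obtain ⟨n, t, ht⟩ := ih
    obtain ⟨c, hc, hcu⟩ := padic_pow_pow hp2 m
    set φ : ℤ_[p] →+* ZMod p := PadicInt.toZMod
    have hcne : φ c ≠ 0 := fun h => hcu ((padic_dvd_iff_toZMod c).mpr h)
    set u : ZMod p := -(φ t) * (φ c)⁻¹ with hu
    set j : ℕ := u.val with hj
    have hju : (j : ZMod p) = u := by
      rw [hj, ZMod.natCast_val, ZMod.cast_id]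
    have hkill : (p:ℤ_[p]) ∣ t + y * j * c := by
      rw [padic_dvd_iff_toZMod]
      have : φ (t + y * j * c) = φ t + 1 * u * φ c := by
        rw [map_add, map_mul, map_mul, map_natCast, hju, hy1]
      rw [this, hu]
      field_simp
      ring
    obtain ⟨s, hs⟩ := hkill
    obtain ⟨e, he⟩ := padic_binom_lin ((p:ℤ_[p])^(m+1) * c) j
    refine ⟨n + p^m * j, s + (p:ℤ_[p])^m * (t*(j:ℤ_[p])*c + y*c^2*e)
      + (p:ℤ_[p])^(2*m+1) * (t*c^2*e), ?_⟩
    have hxn : (1 + (p:ℤ_[p]))^n = y + (p:ℤ_[p])^(m+1) * t := by linear_combination ht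
    rw [pow_add, pow_mul, hc, he, hxn]
    linear_combination ((p:ℤ_[p])^(m+1)) * hs

end aux

theorem stmt_11 (p : ℕ) [Fact p.Prime] (hp : p ≠ 2) (k : ℕ) (hk : 2 ≤ k)
    (v : ℤ_[p]ˣ) (hv : (v : ℤ_[p]) = 1 + (p : ℤ_[p]) ^ k) :
    (↑v⁻¹ : ℤ_[p]) ∈ closure (Set.range fun n : ℕ => ((1 + p : ℤ_[p]) ^ n)) := by
  set y : ℤ_[p] := (↑v⁻¹ : ℤ_[p]) with hy
  have h1 : (1 + (p:ℤ_[p])^k) * y = 1 := by rw [← hv, hy]; exact v.mul_inv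
  have hdvd : (p:ℤ_[p]) ∣ 1 - y := by
    refine ⟨(p:ℤ_[p])^(k-1) * y, ?_⟩
    have hpk : (p:ℤ_[p])^k = (p:ℤ_[p]) * (p:ℤ_[p])^(k-1) := by
      rw [← pow_succ']
      congr 1
      omega
    linear_combination -h1 + y * hpk
  rw [Metric.mem_closure_iff]
  intro ε hε
  have hp1 : (1:ℝ) < p := by exact_mod_cast (Fact.out : p.Prime).one_lt
  obtain ⟨m, hm⟩ := exists_pow_lt_of_lt_one hε (inv_lt_one_of_one_lt₀ hp1)
  obtain ⟨n, hn⟩ := padic_approx hp y hdvd m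
  refine ⟨(1 + (p:ℤ_[p]))^n, ⟨n, rfl⟩, ?_⟩
  have hnorm : ‖(1 + (p:ℤ_[p]))^n - y‖ ≤ (p:ℝ)^(-((m+1):ℕ) : ℤ) :=
    (PadicInt.norm_le_pow_iff_mem_span_pow _ (m+1)).mpr (Ideal.mem_span_singleton.mpr hn)
  have hle : (p:ℝ)^(-((m+1):ℕ) : ℤ) ≤ ((p:ℝ)⁻¹)^m := by
    rw [zpow_neg, zpow_natCast, inv_pow]
    apply inv_anti₀ (by positivity)
    exact pow_le_pow_right₀ (le_of_lt hp1) (by omega)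
  calc dist y ((1 + (p:ℤ_[p]))^n) = ‖(1 + (p:ℤ_[p]))^n - y‖ := by
        rw [dist_eq_norm, norm_sub_rev]
    _ ≤ (p:ℝ)^(-((m+1):ℕ) : ℤ) := hnorm
    _ ≤ ((p:ℝ)⁻¹)^m := hle
    _ < ε := hm
end

section
/- For all nonnegative integers r and s, in GL₃(ℤ_p) one has x_{1122}^{-p^r} · x_{21}^{p^s} · x_{1122}^{p^r} · x_{21}^{-p^s} = x_{21}^{p^s·((1+p)^{2p^r} − 1)}, where the exponent p^s·((1+p)^{2p^r} − 1) is a natural number. -/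
open Matrix

lemma one_add_std_pow {R : Type*} [CommRing R] (c : R) (m : ℕ) :
    (1 + Matrix.single (1 : Fin 3) (0 : Fin 3) c) ^ m
      = 1 + Matrix.single (1 : Fin 3) (0 : Fin 3) ((m : R) * c) := by
  induction m with
  | zero => simp
  | succ k ih =>
    have h0 : Matrix.single (1 : Fin 3) (0 : Fin 3) ((k : R) * c) *
        Matrix.single (1 : Fin 3) (0 : Fin 3) c = 0 :=
      by apply Matrix.single_mul_single_of_ne; decide
    rw [pow_succ, ih, add_mul, mul_add, mul_add, h0, add_zero]
    simp only [one_mul, mul_one]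
    rw [add_assoc, ← Matrix.single_add]
    have : (c + (k : R) * c) = ((k + 1 : ℕ) : R) * c := by push_cast; ring
    rw [this]

theorem stmt_17 (p : ℕ) [Fact p.Prime] (hp : p ≠ 2)
    (x21 x1122 : GL (Fin 3) ℤ_[p])
    (u : ℤ_[p]ˣ) (hu : (u : ℤ_[p]) = 1 + p)
    (h21 : (x21 : Matrix (Fin 3) (Fin 3) ℤ_[p]) = 1 + Matrix.single 1 0 (p : ℤ_[p]))
    (h1122 : (x1122 : Matrix (Fin 3) (Fin 3) ℤ_[p]) = Matrix.diagonal ![(u : ℤ_[p]), (↑u⁻¹ : ℤ_[p]), 1])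
    (r s : ℕ) :
    (x1122 ^ p ^ r)⁻¹ * x21 ^ p ^ s * x1122 ^ p ^ r * (x21 ^ p ^ s)⁻¹ = x21 ^ (p ^ s * ((1 + p) ^ (2 * p ^ r) - 1)) := by
  set n := p ^ r with hn
  set m := p ^ s with hm
  have htge : 1 ≤ (1 + p) ^ (2 * n) := Nat.one_le_pow _ _ (by omega)
  obtain ⟨t, ht⟩ := Nat.exists_eq_add_of_le htge
  have hk : m * ((1 + p) ^ (2 * n) - 1) + m = m * ((1 + p) ^ (2 * n)) := by
    rw [ht]; simp; ring
  rw [mul_inv_eq_iff_eq_mul, mul_assoc, inv_mul_eq_iff_eq_mul, ← pow_add, hk]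
  have hx21 : ∀ N : ℕ, ((x21 ^ N : GL (Fin 3) ℤ_[p]) : Matrix (Fin 3) (Fin 3) ℤ_[p])
      = 1 + Matrix.single 1 0 ((N : ℤ_[p]) * p) := by
    intro N
    rw [Units.val_pow_eq_pow_val, h21, one_add_std_pow]
  have hdg : ((x1122 ^ n : GL (Fin 3) ℤ_[p]) : Matrix (Fin 3) (Fin 3) ℤ_[p])
      = Matrix.diagonal ![(u : ℤ_[p]) ^ n, (↑u⁻¹ : ℤ_[p]) ^ n, 1] := by
    have hv : (![(u : ℤ_[p]), (↑u⁻¹ : ℤ_[p]), 1] : Fin 3 → ℤ_[p]) ^ n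
        = ![(u : ℤ_[p]) ^ n, (↑u⁻¹ : ℤ_[p]) ^ n, 1] := by
      funext i; fin_cases i <;> simp [Pi.pow_apply]
    rw [Units.val_pow_eq_pow_val, h1122, Matrix.diagonal_pow, hv]
  apply Units.ext
  rw [Units.val_mul, Units.val_mul, hx21, hx21, hdg]
  have hcast : ((m * (1 + p) ^ (2 * n) : ℕ) : ℤ_[p]) = (m : ℤ_[p]) * (u : ℤ_[p]) ^ (2 * n) := by
    push_cast [hu]; ring
  have hkey : (↑u⁻¹ : ℤ_[p]) ^ n * ((m : ℤ_[p]) * (u : ℤ_[p]) ^ (2 * n)) = (m : ℤ_[p]) * (u : ℤ_[p]) ^ n := by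
    have : (2 : ℕ) * n = n + n := by ring
    rw [this, pow_add]
    have hinv : (↑u⁻¹ : ℤ_[p]) ^ n * (u : ℤ_[p]) ^ n = 1 := by
      rw [← mul_pow, Units.inv_mul, one_pow]
    calc (↑u⁻¹ : ℤ_[p]) ^ n * ((m : ℤ_[p]) * ((u : ℤ_[p]) ^ n * (u : ℤ_[p]) ^ n))
        = ((↑u⁻¹ : ℤ_[p]) ^ n * (u : ℤ_[p]) ^ n) * ((m : ℤ_[p]) * (u : ℤ_[p]) ^ n) := by ring
      _ = (m : ℤ_[p]) * (u : ℤ_[p]) ^ n := by rw [hinv, one_mul]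
  ext i j
  fin_cases i <;> fin_cases j <;>
    simp [Matrix.mul_apply, Fin.sum_univ_three, Matrix.single, Matrix.diagonal,
      Matrix.one_apply, hcast]
  calc (m : ℤ_[p]) * p * (u : ℤ_[p]) ^ n = ((m : ℤ_[p]) * (u : ℤ_[p]) ^ n) * p := by ring
    _ = (↑u⁻¹ ^ n * ((m : ℤ_[p]) * ↑u ^ (2 * n))) * p := by rw [hkey]
    _ = ↑u⁻¹ ^ n * ((m : ℤ_[p]) * ↑u ^ (2 * n) * p) := by ring
end

section
/- Let p be a prime and let w_m, w_d be polynomials in 𝔽_p[X₁, …, X₈] such that w_m lies in the image of the p-th power expansion map (i.e., w_m is a polynomial in X₁^p, …, X₈^p) and w_m divides the formal partial derivative ∂w_d/∂X_k for every k = 1, …, 8. Then there exist polynomials u ∈ 𝔽_p[X₁, …, X₈] and v in the image of the p-th power expansion map such that w_d = w_m·u + v. -/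
open MvPolynomial

namespace Stmt19

variable {p : ℕ}

lemma aff_inj (hp0 : p ≠ 0) (e : Fin 8 →₀ ℕ) :
    Function.Injective (fun f : Fin 8 →₀ ℕ => p • f + e) := by
  intro a b h
  ext i
  simp only [] at h
  have h2 : (p • a + e) i = (p • b + e) i := by rw [h]
  simp only [Finsupp.add_apply, Finsupp.smul_apply, smul_eq_mul, add_left_inj] at h2
  exact Nat.eq_of_mul_eq_mul_left (Nat.pos_of_ne_zero hp0) h2

noncomputable def compE (hp0 : p ≠ 0) (e : Fin 8 →₀ ℕ)
    (g : MvPolynomial (Fin 8) (ZMod p)) : MvPolynomial (Fin 8) (ZMod p) :=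
  AddMonoidAlgebra.ofCoeff (Finsupp.comapDomain (fun f => p • f + e) (AddMonoidAlgebra.coeff g) ((aff_inj hp0 e).injOn))

lemma coeff_compE (hp0 : p ≠ 0) (e f : Fin 8 →₀ ℕ) (g : MvPolynomial (Fin 8) (ZMod p)) :
    coeff f (compE hp0 e g) = coeff (p • f + e) g := rfl

lemma compE_add (hp0 : p ≠ 0) (e : Fin 8 →₀ ℕ) (g h : MvPolynomial (Fin 8) (ZMod p)) :
    compE hp0 e (g + h) = compE hp0 e g + compE hp0 e h := by
  apply MvPolynomial.ext
  intro f
  simp [coeff_compE, coeff_add]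

lemma compE_zero (hp0 : p ≠ 0) (e : Fin 8 →₀ ℕ) :
    compE hp0 e (0 : MvPolynomial (Fin 8) (ZMod p)) = 0 := by
  apply MvPolynomial.ext
  intro f
  rw [coeff_compE]
  simp

lemma compE_monomial_eq (hp0 : p ≠ 0) (e f : Fin 8 →₀ ℕ) (c : ZMod p) :
    compE hp0 e (monomial (p • f + e) c) = monomial f c := by
  apply MvPolynomial.ext
  intro f'
  rw [coeff_compE, coeff_monomial, coeff_monomial]
  by_cases h : f = f'
  · subst h; simp
  · rw [if_neg h, if_neg]
    intro hc
    exact h (aff_inj hp0 e hc)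

lemma compE_monomial_ne (hp0 : p ≠ 0) (e d : Fin 8 →₀ ℕ) (c : ZMod p)
    (hd : ∀ f, d ≠ p • f + e) :
    compE hp0 e (monomial d c) = 0 := by
  apply MvPolynomial.ext
  intro f'
  rw [coeff_compE, coeff_monomial, coeff_zero, if_neg]
  exact fun hc => hd f' hc

lemma expand_monomial' (hp0 : p ≠ 0) (d : Fin 8 →₀ ℕ) (c : ZMod p) :
    expand p (monomial d c) = monomial (p • d) c := by
  rw [expand_monomial, monomial_eq]

lemma compE_expand_mul (hp0 : p ≠ 0) (e : Fin 8 →₀ ℕ) (he : ∀ i, e i < p)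
    (a h : MvPolynomial (Fin 8) (ZMod p)) :
    compE hp0 e (expand p a * h) = a * compE hp0 e h := by
  induction a using MvPolynomial.induction_on' with
  | add a1 a2 ih1 ih2 => rw [map_add, add_mul, compE_add, ih1, ih2, add_mul]
  | monomial q c =>
    induction h using MvPolynomial.induction_on' with
    | add h1' h2' ih1 ih2 => rw [mul_add, compE_add, ih1, ih2, compE_add, mul_add]
    | monomial d c' =>
      rw [expand_monomial' hp0, monomial_mul]
      by_cases hd : ∃ f, d = p • f + e
      · obtain ⟨f, rfl⟩ := hd
        have hrw : p • q + (p • f + e) = p • (q + f) + e := by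
          rw [smul_add, add_assoc]
        rw [hrw, compE_monomial_eq, compE_monomial_eq, monomial_mul]
      · push_neg at hd
        rw [compE_monomial_ne hp0 e _ _ hd, mul_zero, compE_monomial_ne]
        intro f' hf'
        apply hd (f' - q)
        ext i
        have hi : p * q i + d i = p * f' i + e i := by
          have := DFunLike.congr_fun hf' i
          simpa [Finsupp.add_apply, Finsupp.smul_apply] using this
        have hqf : q i ≤ f' i := by
          by_contra hlt
          push_neg at hlt
          have h1 : p * f' i + e i < p * (f' i + 1) :=
            Nat.add_lt_add_left (he i) _
          have h2 : p * (f' i + 1) ≤ p * q i := Nat.mul_le_mul_left p hlt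
          linarith [hi, h1, h2]
        obtain ⟨k, hk⟩ := Nat.le.dest hqf
        have h5 : p * q i + d i = p * q i + (p * k + e i) := by
          rw [hi, ← hk, Nat.mul_add, add_assoc]
        have h6 : d i = p * k + e i := Nat.add_left_cancel h5
        simp only [Finsupp.add_apply, Finsupp.smul_apply, Finsupp.tsub_apply, smul_eq_mul]
        have hk2 : f' i - q i = k := by omega
        rw [hk2]
        exact h6

noncomputable def box (p : ℕ) : Finset (Fin 8 →₀ ℕ) :=
  (Finset.univ : Finset (Fin 8 → Fin p)).image
    (fun t => Finsupp.equivFunOnFinite.symm fun i => (t i : ℕ))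

lemma mem_box (hp0 : p ≠ 0) {e : Fin 8 →₀ ℕ} : e ∈ box p ↔ ∀ i, e i < p := by
  constructor
  · intro he i
    obtain ⟨t, _, rfl⟩ := Finset.mem_image.mp he
    exact (t i).isLt
  · intro h
    apply Finset.mem_image.mpr
    refine ⟨fun i => ⟨e i, h i⟩, Finset.mem_univ _, ?_⟩
    ext i
    simp [Finsupp.equivFunOnFinite]

lemma decomp (hp0 : p ≠ 0) (g : MvPolynomial (Fin 8) (ZMod p)) :
    g = ∑ e ∈ box p, expand p (compE hp0 e g) * monomial e 1 := by
  induction g using MvPolynomial.induction_on' with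
  | add g1 g2 ih1 ih2 =>
    simp only [compE_add, map_add, add_mul, Finset.sum_add_distrib, ← ih1, ← ih2]
  | monomial d c =>
    have he0 : d = p • Finsupp.mapRange (· / p) (Nat.zero_div p) d
        + Finsupp.mapRange (· % p) (Nat.zero_mod p) d := by
      ext i
      simp only [Finsupp.add_apply, Finsupp.smul_apply, Finsupp.mapRange_apply, smul_eq_mul]
      exact (Nat.div_add_mod (d i) p).symm
    set f0 := Finsupp.mapRange (· / p) (Nat.zero_div p) d with hf0
    set e0 := Finsupp.mapRange (· % p) (Nat.zero_mod p) d with hesdef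
    have he0mem : e0 ∈ box p := by
      rw [mem_box hp0]
      intro i
      simpa [hesdef, Finsupp.mapRange_apply] using Nat.mod_lt (d i) (Nat.pos_of_ne_zero hp0)
    rw [Finset.sum_eq_single e0]
    · rw [he0, compE_monomial_eq, expand_monomial' hp0, monomial_mul, mul_one]
    · intro e he hne
      rw [compE_monomial_ne, map_zero, zero_mul]
      intro f hf
      apply hne
      ext i
      have hi : d i = p * f i + e i := by
        have := DFunLike.congr_fun hf i
        simpa [Finsupp.add_apply, Finsupp.smul_apply] using this
      have hei : e i < p := (mem_box hp0).mp he i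
      simp only [hesdef, Finsupp.mapRange_apply, hi]
      rw [Nat.mul_add_mod, Nat.mod_eq_of_lt hei]
    · intro h0
      exact absurd he0mem h0
  
lemma compE_pderiv (hp0 : p ≠ 0) (e : Fin 8 →₀ ℕ) (k : Fin 8) (hek : e k ≠ 0)
    (g : MvPolynomial (Fin 8) (ZMod p)) :
    compE hp0 (e - Finsupp.single k 1) (pderiv k g)
      = (e k : ZMod p) • compE hp0 e g := by
  induction g using MvPolynomial.induction_on' with
  | add g1 g2 ih1 ih2 => rw [map_add, compE_add, ih1, ih2, compE_add, smul_add]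
  | monomial d c =>
    rw [pderiv_monomial]
    by_cases hd : ∃ f, d = p • f + e
    · obtain ⟨f, rfl⟩ := hd
      have h1 : (p • f + e) - Finsupp.single k 1 = p • f + (e - Finsupp.single k 1) := by
        ext i
        simp only [Finsupp.tsub_apply, Finsupp.add_apply, Finsupp.smul_apply, smul_eq_mul]
        by_cases hik : i = k
        · subst hik
          simp only [Finsupp.single_eq_same]
          omega
        · simp [Finsupp.single_eq_of_ne hik]
      rw [h1, compE_monomial_eq, compE_monomial_eq, smul_monomial, smul_eq_mul]
      congr 1
      simp only [Finsupp.add_apply, Finsupp.smul_apply, smul_eq_mul]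
      push_cast
      rw [ZMod.natCast_self]
      ring
    · push_neg at hd
      rw [compE_monomial_ne hp0 e d c hd, smul_zero]
      by_cases hdk : d k = 0
      · rw [hdk]
        rw [Nat.cast_zero, mul_zero, monomial_zero, compE_zero]
      · apply compE_monomial_ne
        intro f hf
        apply hd f
        ext i
        have hi := DFunLike.congr_fun hf i
        simp only [Finsupp.tsub_apply, Finsupp.add_apply, Finsupp.smul_apply, smul_eq_mul] at hi ⊢
        by_cases hik : i = k
        · subst hik
          simp only [Finsupp.single_eq_same] at hi ⊢
          omega
        · simpa [Finsupp.single_eq_of_ne hik] using hi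

end Stmt19

theorem stmt_19 (p : ℕ) (hp : p.Prime) (wm wd : MvPolynomial (Fin 8) (ZMod p))
    (hm : ∃ w' : MvPolynomial (Fin 8) (ZMod p), wm = MvPolynomial.expand p w')
    (hdvd : ∀ k : Fin 8, wm ∣ MvPolynomial.pderiv k wd) :
    ∃ (u v' : MvPolynomial (Fin 8) (ZMod p)),
      wd = wm * u + MvPolynomial.expand p v' := by
  haveI := Fact.mk hp
  have hp0 : p ≠ 0 := hp.pos.ne'
  obtain ⟨w', rfl⟩ := hm
  open Stmt19 in
  have key : ∀ e : Fin 8 →₀ ℕ, (∀ i, e i < p) → e ≠ 0 → w' ∣ compE hp0 e wd := by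
    intro e hlt hne
    obtain ⟨k, hk⟩ : ∃ k, e k ≠ 0 := by
      by_contra hc
      push_neg at hc
      exact hne (Finsupp.ext hc)
    obtain ⟨h, hh⟩ := hdvd k
    have h2 : compE hp0 (e - Finsupp.single k 1) (MvPolynomial.pderiv k wd)
        = w' * compE hp0 (e - Finsupp.single k 1) h := by
      rw [hh]
      exact compE_expand_mul hp0 _
        (fun i => lt_of_le_of_lt (by rw [Finsupp.tsub_apply]; exact Nat.sub_le _ _) (hlt i)) w' h
    rw [compE_pderiv hp0 e k hk] at h2
    have hek : (e k : ZMod p) ≠ 0 := by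
      rw [Ne, ZMod.natCast_eq_zero_iff]
      intro hdvd'
      exact absurd (Nat.le_of_dvd (Nat.pos_of_ne_zero hk) hdvd') (not_le.mpr (hlt k))
    refine ⟨(e k : ZMod p)⁻¹ • compE hp0 (e - Finsupp.single k 1) h, ?_⟩
    have h3 := congrArg (fun x => (e k : ZMod p)⁻¹ • x) h2
    simp only [smul_smul, inv_mul_cancel₀ hek, one_smul] at h3
    rw [h3, mul_smul_comm]
  open Stmt19 in
  have hdec := decomp hp0 wd
  have h0box : (0 : Fin 8 →₀ ℕ) ∈ Stmt19.box p :=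
    (Stmt19.mem_box hp0).mpr (fun _ => hp.pos)
  rw [Finset.sum_eq_sum_sdiff_singleton_add h0box] at hdec
  open Stmt19 in
  have hdvdsum : MvPolynomial.expand p w' ∣
      ∑ e ∈ Stmt19.box p \ {0}, MvPolynomial.expand p (compE hp0 e wd) * MvPolynomial.monomial e 1 := by
    apply Finset.dvd_sum
    intro e he
    rw [Finset.mem_sdiff, Finset.mem_singleton] at he
    exact Dvd.dvd.mul_right
      (map_dvd (MvPolynomial.expand p) (key e ((Stmt19.mem_box hp0).mp he.1) he.2)) _
  obtain ⟨u, hu⟩ := hdvdsum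
  refine ⟨u, Stmt19.compE hp0 0 wd, ?_⟩
  rw [hu] at hdec
  simpa using hdec
end
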